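/- Let (P, ∘, [·,·]) be a finite-dimensional transposed Poisson algebra over an algebraically closed field F of characteristic different from 2. Then there exist ideals D and N of P such that P = D ⊕ N, the algebra (D, ∘) is unital, and the algebra (N, ∘) is nilpotent. Moreover, D decomposes as a direct sum D = ⊕_{i∈Δ} D_i of ideals D_i such that for every x ∈ D_i the restriction of P_x to D_i has a unique eigenvalue. -/

import Mathlib

/-- Left-nested product `(...((a ∘ b₁) ∘ b₂) ∘ ...) ∘ bₘ` of an element with a list,
with respect to a bilinear multiplication `mul`. For an associative commutative
multiplication this computes the product of the `m+1` elements `a, b₁, …, bₘ`. -/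
def nprod {F A : Type*} [Field F] [AddCommGroup A] [Module F A]
    (mul : A →ₗ[F] A →ₗ[F] A) : A → List A → A
  | a, [] => a
  | a, b :: l => nprod mul (mul a b) l

open Polynomial Module

section TPAaux

variable {F P : Type*} [Field F] [AddCommGroup P] [Module F P]
variable (mul bra : P →ₗ[F] P →ₗ[F] P)
variable (hchar : (2 : F) ≠ 0)
    (hcomm : ∀ x y : P, mul x y = mul y x)
    (hassoc : ∀ x y z : P, mul (mul x y) z = mul x (mul y z))
    (halt : ∀ x : P, bra x x = 0)
    (hleib : ∀ x y z : P, (2 : F) • mul x (bra y z) = bra (mul x y) z + bra y (mul x z))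

/-! ### Basic multiplication operator lemmas -/

include hassoc in
lemma mul_mul_comp (x y : P) : mul (mul x y) = mul x ∘ₗ mul y := by
  ext z; exact hassoc x y z

include hcomm hassoc in
lemma commute_mul (x y : P) : Commute (mul x) (mul y) := by
  show mul x * mul y = mul y * mul x
  have h1 : mul x * mul y = mul x ∘ₗ mul y := rfl
  have h2 : mul y * mul x = mul y ∘ₗ mul x := rfl
  rw [h1, h2, ← mul_mul_comp mul hassoc, ← mul_mul_comp mul hassoc, hcomm]

include hassoc in
lemma mul_pow_elt (a : P) (n : ℕ) : mul ((mul a ^ n) a) = mul a ^ (n + 1) := by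
  induction n with
  | zero => simp [pow_one]
  | succ n ih =>
    have : (mul a ^ (n+1)) a = mul a ((mul a ^ n) a) := by
      rw [pow_succ']; rfl
    rw [this, mul_mul_comp mul hassoc, ih]
    show mul a * mul a ^ (n+1) = _
    rw [← pow_succ']

include hassoc in
lemma mul_aeval_elt (a : P) (w : Polynomial F) :
    mul ((aeval (mul a : Module.End F P) w) a)
      = (mul a : Module.End F P) * aeval (mul a : Module.End F P) w := by
  induction w using Polynomial.induction_on' with
  | add p q hp hq => rw [map_add, LinearMap.add_apply, map_add, hp, hq, mul_add]
  | monomial n c =>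
    rw [aeval_monomial]
    have : ((algebraMap F (Module.End F P)) c * (mul a : Module.End F P) ^ n) a
        = c • ((mul a ^ n) a) := by
      simp [Algebra.algebraMap_eq_smul_one, Module.End.mul_apply]
    rw [this, map_smul, mul_pow_elt mul hassoc, Algebra.algebraMap_eq_smul_one]
    rw [smul_mul_assoc, one_mul, mul_smul_comm, ← pow_succ']

/-! ### Polynomial evaluation helper lemmas -/

lemma pow_mem_inv (f : Module.End F P) (S : Submodule F P)
    (hS : ∀ x ∈ S, f x ∈ S) : ∀ n, ∀ x ∈ S, (f ^ n) x ∈ S := by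
  intro n
  induction n with
  | zero => intro x hx; simpa using hx
  | succ n ih =>
    intro x hx
    rw [pow_succ, Module.End.mul_apply]
    exact ih _ (hS x hx)

lemma aeval_mem (f : Module.End F P) (S : Submodule F P)
    (hS : ∀ x ∈ S, f x ∈ S) (w : Polynomial F) (x : P) (hx : x ∈ S) :
    (aeval f w) x ∈ S := by
  induction w using Polynomial.induction_on' with
  | add p q hp hq => rw [map_add, LinearMap.add_apply]; exact S.add_mem hp hq
  | monomial n c =>
    rw [aeval_monomial]
    have : ((algebraMap F (Module.End F P)) c * f ^ n) x = c • ((f ^ n) x) := by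
      simp [Algebra.algebraMap_eq_smul_one, Module.End.mul_apply]
    rw [this]
    exact S.smul_mem _ (pow_mem_inv f S hS n x hx)

lemma aeval_eigen (f : Module.End F P) {v : P} {μ : F} (hv : f v = μ • v)
    (p : Polynomial F) : (aeval f p) v = p.eval μ • v := by
  induction p using Polynomial.induction_on' with
  | add p q hp hq => rw [map_add, LinearMap.add_apply, hp, hq, eval_add, add_smul]
  | monomial n c =>
    have hpow : ∀ n : ℕ, (f ^ n) v = μ ^ n • v := by
      intro n
      induction n with
      | zero => simp
      | succ n ih =>
        rw [pow_succ, Module.End.mul_apply, hv, map_smul, ih, smul_smul, pow_succ, mul_comm]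
    rw [aeval_monomial, Module.End.mul_apply, hpow, eval_monomial]
    simp [Algebra.algebraMap_eq_smul_one, smul_smul, mul_comm]

/-! ### The core idempotent construction -/

include hassoc in
lemma idem_core (b : P) (r' : ℕ) (q : Polynomial F)
    (hm : minpoly F (mul b : Module.End F P) = X ^ (r' + 1) * q)
    (hmT : aeval (mul b : Module.End F P) (minpoly F (mul b : Module.End F P)) = 0)
    (hqmon : q.Monic) (hqdeg : 0 < q.degree)
    (hq0 : ¬ (X ∣ q)) :
    ∃ f : P, mul f f = f ∧ (∃ c : Polynomial F, f = aeval (mul b : Module.End F P) c b) ∧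
      ∃ α β : Polynomial F,
        (mul f : Module.End F P) = aeval (mul b : Module.End F P) (α * X ^ (r' + 1))
        ∧ α ≠ 0 ∧ α.degree < q.degree ∧ α * X ^ (r' + 1) + β * q = 1 := by
  have hcop : IsCoprime (X ^ (r' + 1)) q :=
    ((irreducible_X (R := F)).coprime_iff_not_dvd.mpr hq0).pow_left
  obtain ⟨α₀, β₀, hbez₀⟩ := hcop
  set α : Polynomial F := α₀ %ₘ q with hαdef
  set β : Polynomial F := β₀ + X ^ (r' + 1) * (α₀ /ₘ q) with hβdef
  have hdiveq : α₀ %ₘ q + q * (α₀ /ₘ q) = α₀ := modByMonic_add_div α₀ q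
  have hbez : α * X ^ (r' + 1) + β * q = 1 := by
    rw [hαdef, hβdef]; linear_combination hbez₀ + X ^ (r' + 1) * hdiveq
  have hαdeg : α.degree < q.degree := degree_modByMonic_lt α₀ hqmon
  have hαne : α ≠ 0 := by
    intro h0
    rw [h0, zero_mul, zero_add] at hbez
    have : IsUnit q := IsUnit.of_mul_eq_one β (by linear_combination hbez)
    have := degree_eq_zero_of_isUnit this
    rw [this] at hqdeg; exact (lt_irrefl _ hqdeg)
  set T : Module.End F P := mul b with hT
  set g : P := aeval T (α * X ^ r') b with hg
  set E : Module.End F P := aeval T (α * X ^ (r' + 1)) with hE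
  have hmulg : mul g = E := by
    rw [hg, mul_aeval_elt mul hassoc b (α * X ^ r'), hE]
    conv_rhs => rw [show α * X ^ (r' + 1) = X * (α * X ^ r') by ring, map_mul, aeval_X]
  have hEE : E * E = E := by
    have hpoly : (α * X ^ (r' + 1)) * (α * X ^ (r' + 1))
        = α * X ^ (r' + 1) - (α * β) * (X ^ (r' + 1) * q) := by
      linear_combination (α * X ^ (r' + 1)) * hbez
    rw [hE, ← map_mul, hpoly, ← hm]; simp [map_sub, map_mul, hmT]
  have h1 : mul (E g) = E := by
    have h2 : E g = mul g g := by rw [hmulg]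
    rw [h2, mul_mul_comp mul hassoc g g]
    show mul g * mul g = E
    rw [hmulg, hEE]
  refine ⟨E g, ?_, ⟨(α * X ^ (r' + 1)) * (α * X ^ r'), ?_⟩, α, β, ?_, hαne, hαdeg, hbez⟩
  · rw [h1]
    show (E * E) g = E g
    rw [hEE]
  · rw [map_mul]; rfl
  · rw [h1, hE]

variable [FiniteDimensional F P]

/-- Factorization of the minimal polynomial at the root 0. -/
lemma minpoly_factor (T : Module.End F P) :
    ∃ (r : ℕ) (q : Polynomial F), minpoly F T = X ^ r * q ∧ q.Monic ∧ ¬ (X ∣ q) ∧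
      r = (minpoly F T).rootMultiplicity 0 := by
  have hne : minpoly F T ≠ 0 := minpoly.ne_zero_of_finite F T
  set m := minpoly F T
  set r := m.rootMultiplicity 0 with hr
  set q := m /ₘ (X - C 0) ^ r with hq
  have hfact : (X - C 0) ^ r * q = m := pow_mul_divByMonic_rootMultiplicity_eq m 0
  have heval : q.eval 0 ≠ 0 := eval_divByMonic_pow_rootMultiplicity_ne_zero 0 hne
  have hXC : (X - C (0:F)) = X := by rw [map_zero, sub_zero]
  rw [hXC] at hfact
  refine ⟨r, q, hfact.symm, ?_, ?_, rfl⟩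
  · have : ((X : Polynomial F) ^ r).Monic := monic_X_pow r
    exact this.of_mul_monic_left
      (hfact.symm ▸ minpoly.monic (Algebra.IsIntegral.isIntegral (R := F) T))
  · rw [X_dvd_iff, coeff_zero_eq_eval_zero]
    exact heval

include hassoc in
lemma exists_idem_of_not_nilpotent (a : P)
    (hna : ¬ IsNilpotent (mul a : Module.End F P)) :
    ∃ f : P, f ≠ 0 ∧ mul f f = f ∧
      ∃ c : Polynomial F, f = aeval (mul a : Module.End F P) c a := by
  set T : Module.End F P := mul a with hT
  obtain ⟨r, q, hm, hqmon, hqX, -⟩ := minpoly_factor (F := F) T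
  have hmT : aeval T (minpoly F T) = 0 := minpoly.aeval F T
  have hqdeg : 0 < q.degree := by
    rcases lt_or_ge (0 : WithBot ℕ) q.degree with h | h
    · exact h
    · exfalso
      have hqC : q = C (q.coeff 0) := eq_C_of_degree_le_zero h
      have hmon' := hqmon
      rw [hqC] at hmon'
      have : q.coeff 0 = 1 := by simpa [Monic, leadingCoeff] using hmon'
      rw [hqC, this, map_one, mul_one] at hm
      exact hna ⟨r, by have h5 := hmT; rw [hm, map_pow, aeval_X] at h5; exact h5⟩
  rcases Nat.eq_zero_or_pos r with hr0 | hrpos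
  · rw [hr0, pow_zero, one_mul] at hm
    set c₀ : F := (minpoly F T).coeff 0 with hc₀
    have hc₀ne : c₀ ≠ 0 := by
      rw [hc₀, coeff_zero_eq_eval_zero]
      intro h
      apply hqX
      rw [X_dvd_iff, coeff_zero_eq_eval_zero, ← hm]
      exact h
    have hsplit : X * (minpoly F T).divX + C c₀ = minpoly F T := X_mul_divX_add _
    set g : P := aeval T (-(C c₀⁻¹) * (minpoly F T).divX) a with hg
    have hmulg : mul g = 1 := by
      rw [hg, mul_aeval_elt mul hassoc a _]
      have h1 : (X : Polynomial F) * (-(C c₀⁻¹) * (minpoly F T).divX)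
          = -(C c₀⁻¹) * (minpoly F T) + C c₀⁻¹ * C c₀ := by
        linear_combination (-(C c₀⁻¹ : Polynomial F)) * hsplit
      calc (mul a : Module.End F P) * aeval T (-(C c₀⁻¹) * (minpoly F T).divX)
          = aeval T (X * (-(C c₀⁻¹) * (minpoly F T).divX)) := by
            conv_rhs => rw [map_mul, aeval_X]
        _ = aeval T (-(C c₀⁻¹) * (minpoly F T)) + aeval T (C c₀⁻¹ * C c₀) := by
            rw [h1, map_add]
        _ = 1 := by
            rw [map_mul, hmT, mul_zero, zero_add, ← C_mul, inv_mul_cancel₀ hc₀ne, C_1, map_one]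
    refine ⟨g, ?_, ?_, ⟨-(C c₀⁻¹) * (minpoly F T).divX, rfl⟩⟩
    · intro h0
      apply hna
      refine ⟨1, ?_⟩
      have : (1 : Module.End F P) = 0 := by rw [← hmulg, h0, map_zero]
      ext x
      have := congrArg (fun f : Module.End F P => f (T x)) this
      simpa using this
    · show (mul g) g = g
      rw [hmulg]; rfl
  · obtain ⟨r', rfl⟩ : ∃ r', r = r' + 1 := ⟨r - 1, by omega⟩
    obtain ⟨f, hfidem, hfc, α, β, hmulf, hαne, hαdeg, hbez⟩ :=
      idem_core mul hassoc a r' q hm hmT hqmon hqdeg hqX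
    refine ⟨f, ?_, hfidem, hfc⟩
    intro h0
    have hE0 : aeval T (α * X ^ (r' + 1)) = 0 := by rw [← hmulf, h0, map_zero]
    have hdvd : minpoly F T ∣ α * X ^ (r' + 1) := minpoly.dvd F T hE0
    rw [hm] at hdvd
    have hXne : (X : Polynomial F) ^ (r' + 1) ≠ 0 := pow_ne_zero _ X_ne_zero
    have hqα : q ∣ α := by
      have h2 : X ^ (r' + 1) * q ∣ X ^ (r' + 1) * α := by
        rw [mul_comm α (X ^ (r' + 1))] at hdvd; exact hdvd
      exact (mul_dvd_mul_iff_left hXne).mp h2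
    have := degree_le_of_dvd hqα hαne
    exact absurd hαdeg (not_lt.mpr this)

/-! ### Uniqueness of eigenvalues on connected unital pieces -/

include hcomm hassoc in
lemma unique_eigen_of_conn (f : P) (hf : mul f f = f)
    (hconn : ∀ h : P, mul h h = h → mul f h = h → h = 0 ∨ h = f)
    (x : P) (hx : mul f x = x)
    {v w : P} {lam mu : F} (hv : v ≠ 0) (hw : w ≠ 0)
    (hfv : mul f v = v) (hfw : mul f w = w)
    (hxv : mul x v = lam • v) (hxw : mul x w = mu • w) : lam = mu := by
  by_contra hne
  set b : P := x - lam • f with hb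
  set T : Module.End F P := mul b with hT
  have hsub : ∀ z : P, T z = mul x z - lam • (mul f z) := by
    intro z
    rw [hT, hb, map_sub, map_smul]
    rfl
  have hTv : T v = (0 : F) • v := by rw [hsub, hxv, hfv, sub_self, zero_smul]
  set ν : F := mu - lam with hν
  have hνne : ν ≠ 0 := sub_ne_zero.mpr (Ne.symm hne)
  have hTw : T w = ν • w := by rw [hsub, hxw, hfw, hν, sub_smul]
  have hmT : aeval T (minpoly F T) = 0 := minpoly.aeval F T
  obtain ⟨r, q, hm, hqmon, hqX, -⟩ := minpoly_factor T
  have hq0ne : q.eval 0 ≠ 0 := by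
    intro h; exact hqX (by rw [X_dvd_iff, coeff_zero_eq_eval_zero]; exact h)
  have hev0 : (minpoly F T).eval 0 = 0 := by
    have h1 : (aeval T (minpoly F T)) v = (minpoly F T).eval 0 • v :=
      aeval_eigen T hTv _
    rw [hmT] at h1
    have := (smul_eq_zero.mp h1.symm).resolve_right hv
    exact this
  have hevν : (minpoly F T).eval ν = 0 := by
    have h1 : (aeval T (minpoly F T)) w = (minpoly F T).eval ν • w :=
      aeval_eigen T hTw _
    rw [hmT] at h1
    exact (smul_eq_zero.mp h1.symm).resolve_right hw
  have hrpos : r ≠ 0 := by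
    intro h0
    rw [hm, h0, pow_zero, one_mul] at hev0
    exact hq0ne hev0
  obtain ⟨r', rfl⟩ : ∃ r', r = r' + 1 := ⟨r - 1, by omega⟩
  have hqν : q.eval ν = 0 := by
    rw [hm, eval_mul, eval_pow, eval_X] at hevν
    rcases mul_eq_zero.mp hevν with h | h
    · exact absurd ((pow_eq_zero_iff (Nat.succ_ne_zero r')).mp h) hνne
    · exact h
  have hqdeg : 0 < q.degree := degree_pos_of_root hqmon.ne_zero hqν
  obtain ⟨h, hidem, ⟨c, hc⟩, α, β, hmulh, hαne, hαdeg, hbez⟩ :=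
    idem_core mul hassoc b r' q hm hmT hqmon hqdeg hqX
  have hfh : mul f h = h := by
    set S : Submodule F P := LinearMap.ker ((mul f : Module.End F P) - LinearMap.id) with hS
    have hmemS : ∀ z : P, z ∈ S ↔ mul f z = z := by
      intro z
      rw [hS, LinearMap.mem_ker, LinearMap.sub_apply, LinearMap.id_apply, sub_eq_zero]
    have hbS : b ∈ S := by
      rw [hmemS, hb, map_sub, map_smul, hx, hf]
    have hinv : ∀ z ∈ S, T z ∈ S := by
      intro z hz
      rw [hmemS] at hz ⊢
      rw [hT, ← hassoc f b z, hcomm f b, hassoc b f z, hz]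
    have := aeval_mem T S hinv c b hbS
    rw [← hc] at this
    exact (hmemS h).mp this
  have hhw : mul h w = w := by
    have h1 : (aeval T (α * X ^ (r' + 1))) w = ((α * X ^ (r' + 1)).eval ν) • w :=
      aeval_eigen T hTw _
    have h2 : (α * X ^ (r' + 1)).eval ν = 1 := by
      have := congrArg (fun p : Polynomial F => p.eval ν) hbez
      simp only [eval_add, eval_mul, eval_pow, eval_X, eval_one] at this
      rw [eval_mul, eval_pow, eval_X]
      rw [hqν, mul_zero, add_zero] at this
      exact this
    rw [hmulh, h1, h2, one_smul]
  have hhv : mul h v = 0 := by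
    have h1 : (aeval T (α * X ^ (r' + 1))) v = ((α * X ^ (r' + 1)).eval 0) • v :=
      aeval_eigen T hTv _
    rw [hmulh, h1, eval_mul, eval_pow, eval_X, zero_pow (by omega), mul_zero, zero_smul]
  rcases hconn h hidem hfh with h0 | hf0
  · rw [h0, map_zero, LinearMap.zero_apply] at hhw
    exact hw hhw.symm
  · rw [hf0] at hhv
    rw [hfv] at hhv
    exact hv hhv

end TPAaux

section TPAaux2

variable {F P : Type*} [Field F] [AddCommGroup P] [Module F P]
variable (mul bra : P →ₗ[F] P →ₗ[F] P)
variable (hchar : (2 : F) ≠ 0)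
    (hcomm : ∀ x y : P, mul x y = mul y x)
    (hassoc : ∀ x y z : P, mul (mul x y) z = mul x (mul y z))
    (halt : ∀ x : P, bra x x = 0)
    (hleib : ∀ x y z : P, (2 : F) • mul x (bra y z) = bra (mul x y) z + bra y (mul x z))

/-! ### Products of commuting nilpotent multiplication operators -/

include hcomm hassoc in
lemma commute_prod (b : P) (l : List P) :
    Commute (mul b : Module.End F P)
      ((l.map (fun c => (mul c : Module.End F P))).prod) := by
  apply Commute.list_prod_right
  intro y hy
  obtain ⟨c, -, rfl⟩ := List.mem_map.mp hy
  exact commute_mul mul hcomm hassoc b c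

include hcomm hassoc in
lemma nprod_eq_prod (a : P) (l : List P) :
    nprod mul a l = ((l.map (fun c => (mul c : Module.End F P))).prod) a := by
  induction l generalizing a with
  | nil => simp [nprod]
  | cons b l ih =>
    have h1 : nprod mul a (b :: l) = nprod mul (mul a b) l := rfl
    rw [h1, ih, List.map_cons, List.prod_cons, (commute_prod mul hcomm hassoc b l).eq,
      hcomm a b]
    rfl

variable [FiniteDimensional F P]

include hcomm hassoc in
lemma chain_rank (l : List P)
    (hnil : ∀ b ∈ l, IsNilpotent (mul b : Module.End F P)) :
    Submodule.map ((l.map (fun c => (mul c : Module.End F P))).prod) ⊤ = ⊥ ∨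
      Module.finrank F (Submodule.map ((l.map (fun c => (mul c : Module.End F P))).prod) ⊤)
        + l.length ≤ Module.finrank F P := by
  induction l with
  | nil =>
    right
    have h1 : ((List.map (fun c => (mul c : Module.End F P)) []).prod) = 1 := by simp
    rw [h1]
    have h2 : Submodule.map (1 : Module.End F P) ⊤ = (⊤ : Submodule F P) := by
      rw [Module.End.one_eq_id, Submodule.map_id]
    rw [h2]
    simpa using le_refl (Module.finrank F P)
  | cons b l ih =>
    have hnil' : ∀ c ∈ l, IsNilpotent (mul c : Module.End F P) :=
      fun c hc => hnil c (List.mem_cons_of_mem b hc)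
    set W : Submodule F P :=
      Submodule.map ((l.map (fun c => (mul c : Module.End F P))).prod) ⊤ with hW
    have hsplit : Submodule.map (((b :: l).map (fun c => (mul c : Module.End F P))).prod) ⊤
        = Submodule.map (mul b : Module.End F P) W := by
      rw [List.map_cons, List.prod_cons, hW, ← Submodule.map_comp]
      rfl
    rcases ih hnil' with h0 | hle
    · left
      rw [hsplit, h0, Submodule.map_bot]
    · by_cases hW0 : W = ⊥
      · left; rw [hsplit, hW0, Submodule.map_bot]
      · right
        rw [hsplit]
        have hmaple : Submodule.map (mul b : Module.End F P) W ≤ W := by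
          rintro _ ⟨y, hy, rfl⟩
          obtain ⟨z, -, rfl⟩ := hy
          refine ⟨(mul b) z, Submodule.mem_top, ?_⟩
          have hc := congrArg (fun g : Module.End F P => g z)
            (commute_prod mul hcomm hassoc b l).eq
          simpa [Module.End.mul_apply] using hc.symm
        have hne : Submodule.map (mul b : Module.End F P) W ≠ W := by
          intro heq
          obtain ⟨K, hK⟩ := hnil b List.mem_cons_self
          have hiter : ∀ k : ℕ, Submodule.map ((mul b : Module.End F P) ^ k) W = W := by
            intro k
            induction k with
            | zero => rw [pow_zero, Module.End.one_eq_id, Submodule.map_id]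
            | succ k ihk =>
              rw [pow_succ', Module.End.mul_eq_comp, Submodule.map_comp, ihk, heq]
          have := hiter K
          rw [hK] at this
          rw [Submodule.map_zero] at this
          exact hW0 this.symm
        have hlt : Submodule.map (mul b : Module.End F P) W < W := lt_of_le_of_ne hmaple hne
        have hfr : Module.finrank F (Submodule.map (mul b : Module.End F P) W)
            < Module.finrank F W :=
          Submodule.finrank_lt_finrank_of_lt hlt
        have : (b :: l).length = l.length + 1 := List.length_cons
        omega

include hcomm hassoc in
lemma prod_apply_eq_zero (l : List P)
    (hnil : ∀ b ∈ l, IsNilpotent (mul b : Module.End F P))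
    (hlen : Module.finrank F P ≤ l.length) (x : P) :
    ((l.map (fun c => (mul c : Module.End F P))).prod) x = 0 := by
  have hmem : ((l.map (fun c => (mul c : Module.End F P))).prod) x
      ∈ Submodule.map ((l.map (fun c => (mul c : Module.End F P))).prod) ⊤ :=
    ⟨x, Submodule.mem_top, rfl⟩
  rcases chain_rank mul hcomm hassoc l hnil with h0 | hle
  · rw [h0] at hmem; simpa using hmem
  · have : Module.finrank F
        (Submodule.map ((l.map (fun c => (mul c : Module.End F P))).prod) ⊤) = 0 := by omega
    have hbot := Submodule.finrank_eq_zero.mp this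
    rw [hbot] at hmem; simpa using hmem

end TPAaux2

section TPAaux3

variable {F P : Type*} [Field F] [AddCommGroup P] [Module F P]
variable (mul bra : P →ₗ[F] P →ₗ[F] P)
variable (hchar : (2 : F) ≠ 0)
    (hcomm : ∀ x y : P, mul x y = mul y x)
    (hassoc : ∀ x y z : P, mul (mul x y) z = mul x (mul y z))
    (halt : ∀ x : P, bra x x = 0)
    (hleib : ∀ x y z : P, (2 : F) • mul x (bra y z) = bra (mul x y) z + bra y (mul x z))

/-! ### Lie-theoretic ideal lemmas -/

include halt in
lemma bra_antisym (x y : P) : bra x y = -(bra y x) := by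
  have h := halt (x + y)
  simp only [map_add, LinearMap.add_apply, halt x, halt y, zero_add, add_zero] at h
  exact eq_neg_of_add_eq_zero_left (by rw [add_comm] at h; exact h)

include hassoc in
lemma mul_idem_op {e : P} (he : mul e e = e) (u : P) : mul e (mul e u) = mul e u := by
  rw [← hassoc, he]

include hassoc in
lemma mem_range_idem {e : P} (he : mul e e = e) (x : P) :
    x ∈ LinearMap.range (mul e) ↔ mul e x = x := by
  constructor
  · rintro ⟨y, rfl⟩; exact mul_idem_op mul hassoc he y
  · intro h; exact ⟨x, h⟩

include hassoc hleib in
lemma bra_ey_n {e : P} (he : mul e e = e) (y n : P) (hn : mul e n = 0) :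
    bra (mul e y) n = 0 := by
  have h := hleib e (mul e y) n
  rw [mul_idem_op mul hassoc he y, hn, map_zero, add_zero] at h
  set u : P := bra (mul e y) n with hu
  have h2 := congrArg (mul e) h
  rw [map_smul, mul_idem_op mul hassoc he] at h2
  have h3 : ((2 : F) - 1) • mul e u = 0 := by
    rw [sub_smul, one_smul, h2, sub_self]
  have h4 : mul e u = 0 := by
    rcases smul_eq_zero.mp h3 with h' | h'
    · exfalso
      have h21 : (2 : F) - 1 = 1 := by norm_num
      rw [h21] at h'
      exact one_ne_zero h'
    · exact h'
  rw [← h, h4, smul_zero]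

include hchar hassoc hleib in
lemma bra_mem_ker {e : P} (he : mul e e = e) (y n : P) (hn : mul e n = 0) :
    mul e (bra y n) = 0 := by
  have h := hleib e y n
  rw [hn, map_zero, add_zero, bra_ey_n mul bra hassoc hleib he y n hn] at h
  rcases smul_eq_zero.mp h with h' | h'
  · exact absurd h' hchar
  · exact h'

include hchar hassoc halt hleib in
lemma bra_mem_range {e : P} (he : mul e e = e) (y d : P) (hd : mul e d = d) :
    mul e (bra y d) = bra y d := by
  have hyd : bra y d = bra (mul e y) d + bra (y - mul e y) d := by
    rw [← LinearMap.add_apply, ← map_add, show mul e y + (y - mul e y) = y by abel]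
  have hn : mul e (y - mul e y) = 0 := by
    rw [map_sub, mul_idem_op mul hassoc he, sub_self]
  have hterm2 : bra (y - mul e y) d = 0 := by
    rw [bra_antisym bra halt]
    have : bra d (y - mul e y) = 0 := by
      have hd' : bra (mul e d) (y - mul e y) = 0 :=
        bra_ey_n mul bra hassoc hleib he d _ hn
      rw [hd] at hd'
      exact hd'
    rw [this, neg_zero]
  have hterm1 : mul e (bra (mul e y) d) = bra (mul e y) d := by
    have h := hleib e (mul e y) d
    rw [mul_idem_op mul hassoc he y, hd] at h
    have h2 : (2 : F) • mul e (bra (mul e y) d) = (2 : F) • bra (mul e y) d := by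
      rw [h, two_smul]
    exact smul_right_injective P hchar h2
  rw [hyd, hterm2, add_zero, hterm1]

/-! ### Splitting into connected idempotents and a maximal idempotent -/

variable [FiniteDimensional F P]

include hcomm hassoc in
lemma split_conn : ∀ (n : ℕ) (f : P), mul f f = f →
    finrank F (LinearMap.range (mul f)) ≤ n →
    ∃ L : List P,
      (∀ g ∈ L, mul g g = g ∧ g ≠ 0 ∧ mul f g = g ∧
        (∀ h : P, mul h h = h → mul g h = h → h = 0 ∨ h = g)) ∧
      List.Pairwise (fun g h => mul g h = 0) L ∧ L.sum = f := by
  intro n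
  induction n with
  | zero =>
    intro f hf hrank
    have hbot : LinearMap.range (mul f) = ⊥ :=
      Submodule.finrank_eq_zero.mp (Nat.le_zero.mp hrank)
    have : mul f f = 0 := by
      have : mul f f ∈ LinearMap.range (mul f) := ⟨f, rfl⟩
      rw [hbot] at this; simpa using this
    have hf00 : f = 0 := by rw [← hf, this]
    exact ⟨[], by simp, by simp, by rw [List.sum_nil, hf00]⟩
  | succ n ih =>
    intro f hf hrank
    by_cases hf0 : f = 0
    · exact ⟨[], by simp, by simp, by simp [hf0]⟩
    by_cases hconn : ∀ h : P, mul h h = h → mul f h = h → h = 0 ∨ h = f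
    · refine ⟨[f], ?_, by simp, by simp⟩
      intro g hg
      rw [List.mem_singleton] at hg
      subst hg
      exact ⟨hf, hf0, hf, hconn⟩
    push_neg at hconn
    obtain ⟨h, hhidem, hfh, hh0, hhf⟩ := hconn
    set g2 : P := f - h with hg2
    have hfg2 : mul f g2 = g2 := by rw [hg2, map_sub, hf, hfh]
    have hhf' : mul h f = h := by rw [hcomm]; exact hfh
    have hmg2 : mul g2 = mul f - mul h := by rw [hg2, map_sub]
    have horth : mul h g2 = 0 := by rw [hg2, map_sub, hhf', hhidem, sub_self]
    have horth' : mul g2 h = 0 := by rw [hcomm]; exact horth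
    have hg2idem : mul g2 g2 = g2 := by
      rw [hmg2, LinearMap.sub_apply, hfg2, horth, sub_zero]
    have hg2ne : g2 ≠ 0 := sub_ne_zero.mpr (Ne.symm hhf)
    have hr1 : LinearMap.range (mul h) < LinearMap.range (mul f) := by
      constructor
      · rintro _ ⟨y, rfl⟩
        exact ⟨mul h y, by rw [← hassoc, hfh]⟩
      · intro hle
        have : g2 ∈ LinearMap.range (mul h) := hle ⟨g2, hfg2⟩
        obtain ⟨y, hy⟩ := this
        have : mul h g2 = g2 := by rw [← hy, ← hassoc, hhidem]
        rw [horth] at this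
        exact hg2ne this.symm
    have hr2 : LinearMap.range (mul g2) < LinearMap.range (mul f) := by
      constructor
      · rintro _ ⟨y, rfl⟩
        exact ⟨mul g2 y, by rw [← hassoc, hfg2]⟩
      · intro hle
        have : h ∈ LinearMap.range (mul g2) := hle ⟨h, hfh⟩
        obtain ⟨y, hy⟩ := this
        have : mul g2 h = h := by rw [← hy, ← hassoc, hg2idem]
        rw [horth'] at this
        exact hh0 this.symm
    have hn1 : finrank F (LinearMap.range (mul h)) ≤ n := by
      have := Submodule.finrank_lt_finrank_of_lt hr1
      omega
    have hn2 : finrank F (LinearMap.range (mul g2)) ≤ n := by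
      have := Submodule.finrank_lt_finrank_of_lt hr2
      omega
    obtain ⟨L1, hL1, hpw1, hsum1⟩ := ih h hhidem hn1
    obtain ⟨L2, hL2, hpw2, hsum2⟩ := ih g2 hg2idem hn2
    refine ⟨L1 ++ L2, ?_, ?_, by rw [List.sum_append, hsum1, hsum2, hg2]; abel⟩
    · intro g hg
      rcases List.mem_append.mp hg with hg | hg
      · obtain ⟨hi, hne, hmem, hcn⟩ := hL1 g hg
        exact ⟨hi, hne, by rw [← hmem, ← hassoc, hfh], hcn⟩
      · obtain ⟨hi, hne, hmem, hcn⟩ := hL2 g hg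
        exact ⟨hi, hne, by rw [← hmem, ← hassoc, hfg2], hcn⟩
    · rw [List.pairwise_append]
      refine ⟨hpw1, hpw2, ?_⟩
      intro g hg g' hg'
      obtain ⟨-, -, hmem, -⟩ := hL1 g hg
      obtain ⟨-, -, hmem', -⟩ := hL2 g' hg'
      have hmem1 : mul h g = g := hmem
      have hmem2 : mul g2 g' = g' := hmem'
      calc mul g g' = mul (mul h g) (mul g2 g') := by rw [hmem1, hmem2]
        _ = mul h (mul g (mul g2 g')) := by rw [hassoc]
        _ = mul h (mul (mul g g2) g') := by rw [hassoc]
        _ = mul h (mul (mul g2 g) g') := by rw [hcomm g g2]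
        _ = mul h (mul g2 (mul g g')) := by rw [hassoc]
        _ = mul (mul h g2) (mul g g') := by rw [hassoc]
        _ = 0 := by rw [horth, map_zero, LinearMap.zero_apply]

lemma exists_max_idem :
    ∃ e : P, mul e e = e ∧ ∀ f : P, mul f f = f →
      finrank F (LinearMap.range (mul f)) ≤ finrank F (LinearMap.range (mul e)) := by
  classical
  set n := finrank F P with hn
  set Q : ℕ → Prop :=
    fun r => ∃ e : P, mul e e = e ∧ finrank F (LinearMap.range (mul e)) = r with hQ
  have hQ0 : Q 0 := by
    refine ⟨0, by simp, ?_⟩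
    have : mul (0 : P) = 0 := map_zero mul
    rw [this, LinearMap.range_zero, finrank_bot]
  have hspec : Q (Nat.findGreatest Q n) :=
    Nat.findGreatest_spec (Nat.zero_le n) hQ0
  obtain ⟨e, he, herank⟩ := hspec
  refine ⟨e, he, ?_⟩
  intro f hfidem
  have hle : finrank F (LinearMap.range (mul f)) ≤ n := by
    rw [hn]; exact Submodule.finrank_le _
  have hQf : Q (finrank F (LinearMap.range (mul f))) := ⟨f, hfidem, rfl⟩
  have := Nat.le_findGreatest hle hQf
  omega

include hcomm hassoc in
lemma mul_nilpotent_of_ker (e : P) (he : mul e e = e)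
    (hmax : ∀ f : P, mul f f = f →
      finrank F (LinearMap.range (mul f)) ≤ finrank F (LinearMap.range (mul e)))
    (a : P) (ha : mul e a = 0) : IsNilpotent (mul a : Module.End F P) := by
  by_contra hna
  obtain ⟨f, hfne, hfidem, c, hfc⟩ := exists_idem_of_not_nilpotent mul hassoc a hna
  have hef : mul e f = 0 := by
    have hinv : ∀ z ∈ LinearMap.ker (mul e), (mul a : Module.End F P) z ∈ LinearMap.ker (mul e) := by
      intro z hz
      rw [LinearMap.mem_ker]
      show mul e (mul a z) = 0
      rw [← hassoc, ha, map_zero, LinearMap.zero_apply]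
    have haK : a ∈ LinearMap.ker (mul e) := ha
    have := aeval_mem (mul a : Module.End F P) (LinearMap.ker (mul e)) hinv c a haK
    rw [← hfc] at this
    exact this
  have hfe : mul f e = 0 := by rw [hcomm]; exact hef
  set e' : P := e + f with he'
  have houter : mul e' = mul e + mul f := by rw [he', map_add]
  have he'idem : mul e' e' = e' := by
    rw [houter, LinearMap.add_apply, he', map_add, map_add, he, hef, hfe, hfidem]
    abel
  have hlt : LinearMap.range (mul e) < LinearMap.range (mul e') := by
    constructor
    · rintro _ ⟨y, rfl⟩
      have h1 : mul e (mul e y) = mul e y := mul_idem_op mul hassoc he y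
      have h2 : mul f (mul e y) = 0 := by
        rw [← hassoc, hfe, map_zero, LinearMap.zero_apply]
      refine ⟨mul e y, ?_⟩
      rw [houter, LinearMap.add_apply, h1, h2, add_zero]
    · intro hle
      have hf' : f ∈ LinearMap.range (mul e') := by
        rw [mem_range_idem mul hassoc he'idem]
        rw [houter, LinearMap.add_apply, hef, hfidem, zero_add]
      have hfD : f ∈ LinearMap.range (mul e) := hle hf'
      rw [mem_range_idem mul hassoc he] at hfD
      rw [hef] at hfD
      exact hfne hfD.symm
  have := Submodule.finrank_lt_finrank_of_lt hlt
  have := hmax e' he'idem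
  omega

end TPAaux3

/-- A finite-dimensional transposed Poisson algebra over an algebraically
closed field decomposes as a direct sum of ideals `P = D ⊕ N` with `(D, ∘)` unital and
`(N, ∘)` nilpotent; moreover `D` is a direct sum of ideals `Dᵢ` such that for every
`x ∈ Dᵢ` the restriction of `P_x` to `Dᵢ` has a unique eigenvalue. -/
theorem tpa_decomposition {F P : Type*} [Field F] [IsAlgClosed F] (hchar : (2 : F) ≠ 0)
    [AddCommGroup P] [Module F P] [FiniteDimensional F P]
    (mul bra : P →ₗ[F] P →ₗ[F] P)
    (hcomm : ∀ x y : P, mul x y = mul y x)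
    (hassoc : ∀ x y z : P, mul (mul x y) z = mul x (mul y z))
    (halt : ∀ x : P, bra x x = 0)
    (hjac : ∀ x y z : P, bra x (bra y z) + bra y (bra z x) + bra z (bra x y) = 0)
    (hleib : ∀ x y z : P, (2 : F) • mul x (bra y z) = bra (mul x y) z + bra y (mul x z)) :
    ∃ D N : Submodule F P,
      -- D and N are ideals of the transposed Poisson algebra
      (∀ y : P, ∀ x ∈ D, mul y x ∈ D ∧ bra y x ∈ D)
      ∧ (∀ y : P, ∀ x ∈ N, mul y x ∈ N ∧ bra y x ∈ N)
      -- P = D ⊕ N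
      ∧ D ⊓ N = ⊥ ∧ D ⊔ N = ⊤
      -- (D, ∘) is unital
      ∧ (∃ e ∈ D, ∀ x ∈ D, mul e x = x)
      -- (N, ∘) is nilpotent
      ∧ (∃ k : ℕ, 1 ≤ k ∧ ∀ a ∈ N, ∀ l : List P, (∀ b ∈ l, b ∈ N) →
            l.length + 1 = k → nprod mul a l = 0)
      -- D = ⊕ᵢ Dᵢ, an independent supremum of ideals
      ∧ (∃ (ι : Type) (Di : ι → Submodule F P),
          (∀ i, ∀ y : P, ∀ x ∈ Di i, mul y x ∈ Di i ∧ bra y x ∈ Di i)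
          ∧ iSupIndep Di ∧ (⨆ i, Di i) = D
          -- for every `x ∈ Dᵢ`, the restriction of `P_x` to `Dᵢ` has a unique eigenvalue
          ∧ ∀ i, ∀ x ∈ Di i,
              ∃! lam : F, ∃ v ∈ Di i, v ≠ 0 ∧ mul x v = lam • v) := by
  classical
  obtain ⟨e, he, hmax⟩ := exists_max_idem mul
  set D : Submodule F P := LinearMap.range (mul e) with hD
  set N : Submodule F P := LinearMap.ker (mul e) with hN
  have hmemD : ∀ x : P, x ∈ D ↔ mul e x = x := fun x => mem_range_idem mul hassoc he x
  have hmemN : ∀ x : P, x ∈ N ↔ mul e x = 0 := fun x => LinearMap.mem_ker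
  -- the range of any idempotent is a ∘-ideal
  have hidealD : ∀ (g : P), mul g g = g → ∀ y x : P, mul g x = x → mul g (mul y x) = mul y x := by
    intro g hg y x hx
    calc mul g (mul y x) = mul (mul g y) x := (hassoc g y x).symm
      _ = mul (mul y g) x := by rw [hcomm g y]
      _ = mul y (mul g x) := hassoc y g x
      _ = mul y x := by rw [hx]
  refine ⟨D, N, ?_, ?_, ?_, ?_, ?_, ?_, ?_⟩
  · -- D is an ideal
    intro y x hx
    constructor
    · exact (hmemD _).mpr (hidealD e he y x ((hmemD x).mp hx))
    · exact (hmemD _).mpr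
        (bra_mem_range mul bra hchar hassoc halt hleib he y x ((hmemD x).mp hx))
  · -- N is an ideal
    intro y x hx
    constructor
    · rw [hmemN]
      calc mul e (mul y x) = mul (mul e y) x := (hassoc e y x).symm
        _ = mul (mul y e) x := by rw [hcomm e y]
        _ = mul y (mul e x) := hassoc y e x
        _ = 0 := by rw [(hmemN x).mp hx, map_zero]
    · exact (hmemN _).mpr (bra_mem_ker mul bra hchar hassoc hleib he y x ((hmemN x).mp hx))
  · -- D ⊓ N = ⊥
    rw [Submodule.eq_bot_iff]
    intro x hx
    rw [Submodule.mem_inf] at hx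
    obtain ⟨hx1, hx2⟩ := hx
    rw [hmemD] at hx1
    rw [hmemN] at hx2
    rw [← hx1, hx2]
  · -- D ⊔ N = ⊤
    rw [eq_top_iff]
    intro x _
    have h1 : mul e x ∈ D := ⟨x, rfl⟩
    have h2 : x - mul e x ∈ N := by
      rw [hmemN, map_sub, mul_idem_op mul hassoc he, sub_self]
    have h3 : x = mul e x + (x - mul e x) := by abel
    rw [h3]
    exact Submodule.add_mem _ (Submodule.mem_sup_left h1) (Submodule.mem_sup_right h2)
  · -- unital
    exact ⟨e, ⟨e, he⟩, fun x hx => (hmemD x).mp hx⟩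
  · -- nilpotent
    refine ⟨Module.finrank F P + 1, by omega, ?_⟩
    intro a ha l hl hlen
    rw [nprod_eq_prod mul hcomm hassoc a l]
    exact prod_apply_eq_zero mul hcomm hassoc l
      (fun b hb => mul_nilpotent_of_ker mul hcomm hassoc e he hmax b ((hmemN b).mp (hl b hb)))
      (by omega) a
  · -- decomposition of D
    obtain ⟨L, hLmem, hLpw, hLsum⟩ :=
      split_conn mul hcomm hassoc (Module.finrank F (LinearMap.range (mul e))) e he le_rfl
    refine ⟨Fin L.length, fun i => LinearMap.range (mul (L.get i)), ?_, ?_, ?_, ?_⟩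
    · -- each Dᵢ is an ideal
      intro i y x hx
      obtain ⟨hgidem, hgne, hegi, hgconn⟩ := hLmem (L.get i) (L.get_mem i)
      constructor
      · exact (mem_range_idem mul hassoc hgidem _).mpr
          (hidealD (L.get i) hgidem y x ((mem_range_idem mul hassoc hgidem x).mp hx))
      · exact (mem_range_idem mul hassoc hgidem _).mpr
          (bra_mem_range mul bra hchar hassoc halt hleib hgidem y x
            ((mem_range_idem mul hassoc hgidem x).mp hx))
    · -- independence
      intro i
      obtain ⟨hgidem, hgne, hegi, hgconn⟩ := hLmem (L.get i) (L.get_mem i)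
      have hpair := List.pairwise_iff_get.mp hLpw
      have horthij : ∀ j : Fin L.length, j ≠ i → mul (L.get i) (L.get j) = 0 := by
        intro j hj
        rcases lt_or_gt_of_ne hj with h | h
        · rw [hcomm]; exact hpair j i h
        · exact hpair i j h
      have hker : (⨆ j, ⨆ (_ : j ≠ i), LinearMap.range (mul (L.get j)))
          ≤ LinearMap.ker (mul (L.get i)) := by
        apply iSup_le
        intro j
        apply iSup_le
        intro hj
        rintro _ ⟨y, rfl⟩
        rw [LinearMap.mem_ker, ← hassoc, horthij j hj, map_zero, LinearMap.zero_apply]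
      have hdisj : Disjoint (LinearMap.range (mul (L.get i))) (LinearMap.ker (mul (L.get i))) := by
        rw [disjoint_iff]
        rw [Submodule.eq_bot_iff]
        intro x hx
        rw [Submodule.mem_inf] at hx
        obtain ⟨hx1, hx2⟩ := hx
        rw [mem_range_idem mul hassoc hgidem] at hx1
        rw [LinearMap.mem_ker] at hx2
        rw [← hx1, hx2]
      exact hdisj.mono_right hker
    · -- supremum is D
      apply le_antisymm
      · apply iSup_le
        intro i
        obtain ⟨hgidem, hgne, hegi, hgconn⟩ := hLmem (L.get i) (L.get_mem i)
        rintro _ ⟨y, rfl⟩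
        exact (hmemD _).mpr (by rw [← hassoc, hegi])
      · intro x hx
        have hex : mul e x = x := (hmemD x).mp hx
        have hLs : L.sum = ∑ i : Fin L.length, L.get i := by
          conv_lhs => rw [← List.ofFn_get L]
          rw [Fin.sum_ofFn]
        have hsum : x = ∑ i : Fin L.length, mul (L.get i) x := by
          calc x = mul (L.sum) x := by rw [hLsum, hex]
            _ = ∑ i : Fin L.length, mul (L.get i) x := by
                rw [hLs, map_sum, LinearMap.sum_apply]
        rw [hsum]
        exact Submodule.sum_mem _
          (fun i _ => Submodule.mem_iSup_of_mem i ⟨x, rfl⟩)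
    · -- unique eigenvalue
      intro i x hx
      obtain ⟨hgidem, hgne, hegi, hgconn⟩ := hLmem (L.get i) (L.get_mem i)
      set g : P := L.get i with hgdef
      set Dg : Submodule F P := LinearMap.range (mul g) with hDg
      have hgix : mul g x = x := (mem_range_idem mul hassoc hgidem x).mp hx
      have hinv : ∀ z ∈ Dg, mul x z ∈ Dg := by
        intro z hz
        exact (mem_range_idem mul hassoc hgidem _).mpr
          (hidealD g hgidem x z ((mem_range_idem mul hassoc hgidem z).mp hz))
      haveI : Nontrivial Dg := by
        refine nontrivial_of_ne ⟨g, ⟨g, hgidem⟩⟩ 0 ?_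
        intro h0
        exact hgne (congrArg Subtype.val h0)
      set T' : Module.End F Dg := LinearMap.restrict (mul x) hinv with hT'
      obtain ⟨μ, hμ⟩ := Module.End.exists_eigenvalue T'
      obtain ⟨v, hveig⟩ := hμ.exists_hasEigenvector
      have hvP : mul x (v : P) = μ • (v : P) := by
        have h1 : T' v = μ • v := hveig.apply_eq_smul
        have h2 := congrArg Subtype.val h1
        rw [LinearMap.restrict_coe_apply] at h2
        exact h2
      have hvne : (v : P) ≠ 0 := fun h0 => hveig.2 (Subtype.coe_injective h0)
      refine ⟨μ, ⟨(v : P), v.2, hvne, hvP⟩, ?_⟩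
      rintro lam' ⟨v', hv'mem, hv'ne, heig'⟩
      exact unique_eigen_of_conn mul hcomm hassoc g hgidem hgconn x hgix hv'ne hvne
        ((mem_range_idem mul hassoc hgidem v').mp hv'mem)
        ((mem_range_idem mul hassoc hgidem (v : P)).mp v.2)
        heig' hvP
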